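/- Let H be a real symmetric d×d matrix and g ∈ ℝ^d a nonzero vector with grade g* with respect to H. Then: (a) there exists a nonzero z ∈ K_{g*}(H,g) with ⟨z, Hz⟩ ≤ 0 if and only if H has at least one nonpositive g-relevant eigenvalue; and (b) there exists a nonzero z ∈ K_{g*}(H,g) with ⟨z, Hz⟩ < 0 if and only if H has at least one negative g-relevant eigenvalue. -/

import Mathlib

open Matrix

/-- The Krylov subspace of degree `t`: span of `g, Hg, …, H^{t-1} g`. -/
noncomputable def Krylov {d : ℕ} (H : Matrix (Fin d) (Fin d) ℝ) (g : Fin d → ℝ) (t : ℕ) :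
    Submodule ℝ (Fin d → ℝ) :=
  Submodule.span ℝ ((fun i : ℕ => (H ^ i) *ᵥ g) '' Set.Iio t)

/-- The full Krylov space: span of `{H^i g : i ≥ 0}`. -/
noncomputable def KrylovFull {d : ℕ} (H : Matrix (Fin d) (Fin d) ℝ) (g : Fin d → ℝ) :
    Submodule ℝ (Fin d → ℝ) :=
  Submodule.span ℝ (Set.range fun i : ℕ => (H ^ i) *ᵥ g)

/-- `lam` is a `g`-relevant eigenvalue of `H`: `g` is not orthogonal to `ker (H - lam I)`. -/
def gRelevant {d : ℕ} (H : Matrix (Fin d) (Fin d) ℝ) (g : Fin d → ℝ) (lam : ℝ) : Prop :=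
  ∃ v : Fin d → ℝ, H *ᵥ v = lam • v ∧ v ⬝ᵥ g ≠ 0

/-- The Euclidean norm of a vector. -/
noncomputable def vnorm {d : ℕ} (x : Fin d → ℝ) : ℝ := Real.sqrt (x ⬝ᵥ x)

section Aux

variable {d : ℕ} (H : Matrix (Fin d) (Fin d) ℝ) (g : Fin d → ℝ)

lemma krylov_mono {s t : ℕ} (h : s ≤ t) : Krylov H g s ≤ Krylov H g t :=
  Submodule.span_mono (Set.image_mono (fun _ hx => lt_of_lt_of_le hx h))

lemma pow_mulVec_mem_krylov {i t : ℕ} (h : i < t) : (H ^ i) *ᵥ g ∈ Krylov H g t :=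
  Submodule.subset_span ⟨i, h, rfl⟩

lemma krylov_stab (gstar : ℕ)
    (hgrade : ∀ t : ℕ, Module.finrank ℝ (Krylov H g t) = min t gstar) :
    ∀ t : ℕ, gstar ≤ t → Krylov H g t = Krylov H g gstar := by
  intro t ht
  induction t, ht using Nat.le_induction with
  | base => rfl
  | succ t ht ih =>
    rw [← ih]
    refine (Submodule.eq_of_le_of_finrank_le (krylov_mono H g (Nat.le_succ t)) ?_).symm
    rw [hgrade, hgrade, min_eq_right ht, min_eq_right (le_trans ht (Nat.le_succ t))]

lemma krylovFull_eq (gstar : ℕ) (hgstar : 0 < gstar)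
    (hgrade : ∀ t : ℕ, Module.finrank ℝ (Krylov H g t) = min t gstar) :
    KrylovFull H g = Krylov H g gstar := by
  apply le_antisymm
  · rw [KrylovFull, Submodule.span_le]
    rintro _ ⟨i, rfl⟩
    have h1 : (H ^ i) *ᵥ g ∈ Krylov H g (max (i + 1) gstar) :=
      pow_mulVec_mem_krylov H g (lt_of_lt_of_le (Nat.lt_succ_self i) (le_max_left _ _))
    rwa [krylov_stab H g gstar hgrade _ (le_max_right _ _)] at h1
  · exact Submodule.span_mono (fun x ⟨i, _, hx⟩ => ⟨i, hx⟩)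

lemma aeval_mulVec_mem_krylovFull (p : Polynomial ℝ) :
    (Polynomial.aeval H p) *ᵥ g ∈ KrylovFull H g := by
  induction p using Polynomial.induction_on' with
  | add p q hp hq => rw [map_add, Matrix.add_mulVec]; exact Submodule.add_mem _ hp hq
  | monomial n c =>
    rw [Polynomial.aeval_monomial, ← Algebra.smul_def, Matrix.smul_mulVec]
    exact Submodule.smul_mem _ _ (Submodule.subset_span ⟨n, rfl⟩)

end Aux

theorem npc_direction_iff_gRelevant_nonpos {d : ℕ} (H : Matrix (Fin d) (Fin d) ℝ)
    (hH : H.IsSymm) (g : Fin d → ℝ) (hg : g ≠ 0)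
    (gstar : ℕ) (hgstar : 0 < gstar)
    (hgrade : ∀ t : ℕ, Module.finrank ℝ (Krylov H g t) = min t gstar) :
    ((∃ z ∈ Krylov H g gstar, z ≠ 0 ∧ z ⬝ᵥ (H *ᵥ z) ≤ 0) ↔
      ∃ lam : ℝ, lam ≤ 0 ∧ gRelevant H g lam) ∧
    ((∃ z ∈ Krylov H g gstar, z ≠ 0 ∧ z ⬝ᵥ (H *ᵥ z) < 0) ↔
      ∃ lam : ℝ, lam < 0 ∧ gRelevant H g lam) := by
  classical
  -- H is Hermitian
  have hA : H.IsHermitian := by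
    rw [Matrix.IsHermitian, Matrix.conjTranspose_eq_transpose_of_trivial]
    exact hH
  set u : Fin d → (Fin d → ℝ) := fun i => (WithLp.equiv 2 (Fin d → ℝ)) (hA.eigenvectorBasis i)
    with hu
  set lam : Fin d → ℝ := hA.eigenvalues with hlam
  -- coordinates
  set toE : (Fin d → ℝ) → EuclideanSpace ℝ (Fin d) := ⇑(WithLp.equiv 2 (Fin d → ℝ)).symm
    with htoE
  set a : (Fin d → ℝ) → Fin d → ℝ := fun z i => hA.eigenvectorBasis.repr (toE z) i with ha
  have ha_apply : ∀ (z : Fin d → ℝ) (i : Fin d), a z i = u i ⬝ᵥ z := by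
    intro z i
    simp only [ha, OrthonormalBasis.repr_apply_apply]
    simp [PiLp.inner_apply, RCLike.inner_apply, dotProduct, hu, htoE, mul_comm,
      WithLp.equiv_apply, WithLp.equiv_symm_apply]
  have ha_add : ∀ (y z : Fin d → ℝ) (i : Fin d), a (y + z) i = a y i + a z i := by
    intro y z i
    have h1 : toE (y + z) = toE y + toE z := rfl
    simp only [ha, h1, map_add]
    rfl
  have ha_smul : ∀ (c : ℝ) (z : Fin d → ℝ) (i : Fin d), a (c • z) i = c * a z i := by
    intro c z i
    have h1 : toE (c • z) = c • toE z := rfl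
    simp only [ha, h1, _root_.map_smul]
    rfl
  have ha_zero : ∀ i, a 0 i = 0 := by
    intro i
    have h1 : toE 0 = 0 := rfl
    simp only [ha, h1, map_zero]
    rfl
  have ha_eq : ∀ y z : Fin d → ℝ, (∀ i, a y i = a z i) → y = z := by
    intro y z h
    have h1 : hA.eigenvectorBasis.repr (toE y) = hA.eigenvectorBasis.repr (toE z) := WithLp.ofLp_injective 2 (funext h)
    have h2 := hA.eigenvectorBasis.repr.injective h1
    exact (WithLp.equiv 2 (Fin d → ℝ)).symm.injective h2
  -- dot product in coordinates
  have hdot : ∀ y z : Fin d → ℝ, y ⬝ᵥ z = ∑ i, a y i * a z i := by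
    intro y z
    have h1 : (inner ℝ (hA.eigenvectorBasis.repr (toE y)) (hA.eigenvectorBasis.repr (toE z)) : ℝ)
        = inner ℝ (toE y) (toE z) :=
      hA.eigenvectorBasis.repr.inner_map_map (toE y) (toE z)
    have h2 : (inner ℝ (toE y) (toE z) : ℝ) = y ⬝ᵥ z := by
      simp [PiLp.inner_apply, RCLike.inner_apply, dotProduct, htoE]
      exact Finset.sum_congr rfl fun _ _ => mul_comm _ _
    have h3 : (inner ℝ (hA.eigenvectorBasis.repr (toE y)) (hA.eigenvectorBasis.repr (toE z)) : ℝ)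
        = ∑ i, a y i * a z i := by
      simp only [PiLp.inner_apply, RCLike.inner_apply, conj_trivial, ha]
      exact Finset.sum_congr rfl fun _ _ => mul_comm _ _
    calc y ⬝ᵥ z = inner ℝ (toE y) (toE z) := h2.symm
    _ = _ := h1.symm
    _ = ∑ i, a y i * a z i := h3
  -- coordinates of H *ᵥ z
  have haH : ∀ (z : Fin d → ℝ) (i : Fin d), a (H *ᵥ z) i = lam i * a z i := by
    intro z i
    rw [ha_apply, ha_apply]
    calc u i ⬝ᵥ (H *ᵥ z) = (u i ᵥ* H) ⬝ᵥ z := (Matrix.dotProduct_mulVec _ _ _)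
    _ = (H *ᵥ u i) ⬝ᵥ z := by rw [← Matrix.mulVec_transpose, hH.eq]
    _ = (lam i • u i) ⬝ᵥ z := by rw [hu, hlam]; simp only [WithLp.equiv_apply, hA.mulVec_eigenvectorBasis]
    _ = lam i * (u i ⬝ᵥ z) := by rw [smul_dotProduct]; rfl
  have haPow : ∀ (n : ℕ) (z : Fin d → ℝ) (i : Fin d),
      a ((H ^ n) *ᵥ z) i = lam i ^ n * a z i := by
    intro n
    induction n with
    | zero => intro z i; simp [Matrix.one_mulVec]
    | succ n ih =>
      intro z i
      rw [pow_succ, ← Matrix.mulVec_mulVec, ih, haH, pow_succ]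
      ring
  -- quadratic form in coordinates
  have hquad : ∀ z : Fin d → ℝ, z ⬝ᵥ (H *ᵥ z) = ∑ i, lam i * (a z i) ^ 2 := by
    intro z
    rw [hdot]
    refine Finset.sum_congr rfl fun i _ => ?_
    rw [haH]; ring
  -- nonzero iff some coordinate nonzero
  have hne : ∀ z : Fin d → ℝ, z ≠ 0 → ∃ i, a z i ≠ 0 := by
    intro z hz
    by_contra h
    push_neg at h
    exact hz (ha_eq z 0 (fun i => by rw [h i, ha_zero]))
  -- relevance in coordinates
  have hrel_of : ∀ i : Fin d, a g i ≠ 0 → gRelevant H g (lam i) := by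
    intro i hi
    refine ⟨u i, hA.mulVec_eigenvectorBasis i, ?_⟩
    rwa [← ha_apply]
  have hrel_to : ∀ l : ℝ, gRelevant H g l → ∃ i, lam i = l ∧ a g i ≠ 0 := by
    rintro l ⟨v, hv, hvg⟩
    rw [hdot] at hvg
    obtain ⟨i, -, hi⟩ := Finset.exists_ne_zero_of_sum_ne_zero hvg
    have hvi : a v i ≠ 0 := fun h => hi (by rw [h, zero_mul])
    have hgi : a g i ≠ 0 := fun h => hi (by rw [h, mul_zero])
    have : lam i * a v i = l * a v i := by
      rw [← haH, hv, ha_smul]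
    exact ⟨i, mul_right_cancel₀ hvi this, hgi⟩
  -- membership in Krylov → supported on relevant coordinates
  have hsupp : ∀ z ∈ Krylov H g gstar, ∀ i, a g i = 0 → a z i = 0 := by
    intro z hz
    let P : Submodule ℝ (Fin d → ℝ) :=
      { carrier := {z | ∀ i, a g i = 0 → a z i = 0}
        add_mem' := fun hy hz i hi => by rw [ha_add, hy i hi, hz i hi, add_zero]
        zero_mem' := fun i _ => ha_zero i
        smul_mem' := fun c z hz i hi => by rw [ha_smul, hz i hi, mul_zero] }
    have : Krylov H g gstar ≤ P := by
      rw [Krylov, Submodule.span_le]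
      rintro _ ⟨n, -, rfl⟩ i hi
      rw [haPow, hi, mul_zero]
    exact this hz
  -- construction of an eigen-direction inside the Krylov space
  have hconstruct : ∀ i : Fin d, a g i ≠ 0 →
      ∃ z ∈ Krylov H g gstar, z ≠ 0 ∧ H *ᵥ z = lam i • z := by
    intro i hi
    set s : Finset ℝ := Finset.image lam Finset.univ with hs
    set r : ℝ → ℝ := fun x => if x = lam i then 1 else 0 with hr
    set p : Polynomial ℝ := Lagrange.interpolate s id r with hp
    have hinj : Set.InjOn (id : ℝ → ℝ) s := Function.injective_id.injOn
    have heval : ∀ j : Fin d, p.eval (lam j) = if lam j = lam i then 1 else 0 := by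
      intro j
      have hmem : lam j ∈ s := Finset.mem_image_of_mem _ (Finset.mem_univ j)
      have h := Lagrange.eval_interpolate_at_node (r := r) hinj hmem
      simpa only [id_eq, hr] using h
    refine ⟨(Polynomial.aeval H p) *ᵥ g, ?_, ?_, ?_⟩
    · rw [← krylovFull_eq H g gstar hgstar hgrade]
      exact aeval_mulVec_mem_krylovFull H g p
    · -- nonzero: coordinate i is a g i
      intro h0
      have hcoord : ∀ j, a ((Polynomial.aeval H p) *ᵥ g) j = p.eval (lam j) * a g j := by
        intro j
        induction p using Polynomial.induction_on' with
        | add p q hp hq =>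
          rw [map_add, Matrix.add_mulVec, ha_add, hp, hq, Polynomial.eval_add]; ring
        | monomial n c =>
          rw [Polynomial.aeval_monomial, ← Algebra.smul_def, Matrix.smul_mulVec,
            ha_smul, haPow, Polynomial.eval_monomial]
          ring
      have := hcoord i
      rw [h0, ha_zero, heval i, if_pos rfl, one_mul] at this
      exact hi this.symm
    · -- eigenvector property
      apply ha_eq
      intro j
      have hcoord : ∀ j, a ((Polynomial.aeval H p) *ᵥ g) j = p.eval (lam j) * a g j := by
        intro j
        induction p using Polynomial.induction_on' with
        | add p q hp hq =>
          rw [map_add, Matrix.add_mulVec, ha_add, hp, hq, Polynomial.eval_add]; ring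
        | monomial n c =>
          rw [Polynomial.aeval_monomial, ← Algebra.smul_def, Matrix.smul_mulVec,
            ha_smul, haPow, Polynomial.eval_monomial]
          ring
      rw [haH, ha_smul, hcoord j, heval j]
      by_cases h : lam j = lam i
      · rw [h]
      · simp [h]
  -- positivity of dot square
  have hdotself : ∀ z : Fin d → ℝ, z ≠ 0 → 0 < z ⬝ᵥ z := by
    intro z hz
    obtain ⟨i, hi⟩ := hne z hz
    rw [hdot]
    exact Finset.sum_pos' (fun j _ => mul_self_nonneg _)
      ⟨i, Finset.mem_univ i, mul_self_pos.mpr hi⟩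
  constructor
  · constructor
    · rintro ⟨z, hzK, hz0, hzq⟩
      by_contra hno
      push_neg at hno
      have hpos : ∀ i, a g i ≠ 0 → 0 < lam i := fun i hi =>
        lt_of_not_ge fun h => hno _ h (hrel_of i hi)
      have hgt : 0 < z ⬝ᵥ (H *ᵥ z) := by
        rw [hquad]
        obtain ⟨i, hi⟩ := hne z hz0
        refine Finset.sum_pos' (fun j _ => ?_) ⟨i, Finset.mem_univ i, ?_⟩
        · by_cases hj : a z j = 0
          · rw [hj]; simp
          · have := hpos j (fun h => hj (hsupp z hzK j h)); positivity
        · have hgi : a g i ≠ 0 := fun h => hi (hsupp z hzK i h)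
          have := hpos i hgi
          positivity
      linarith
    · rintro ⟨l, hl, hrel⟩
      obtain ⟨i, hli, hgi⟩ := hrel_to l hrel
      obtain ⟨z, hzK, hz0, hze⟩ := hconstruct i hgi
      refine ⟨z, hzK, hz0, ?_⟩
      rw [hze, dotProduct_smul, smul_eq_mul]
      have h1 := hdotself z hz0
      have h2 : lam i ≤ 0 := hli ▸ hl
      nlinarith
  · constructor
    · rintro ⟨z, hzK, hz0, hzq⟩
      by_contra hno
      push_neg at hno
      have hpos : ∀ i, a g i ≠ 0 → 0 ≤ lam i := fun i hi =>
        le_of_not_gt fun h => hno _ h (hrel_of i hi)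
      have hgt : 0 ≤ z ⬝ᵥ (H *ᵥ z) := by
        rw [hquad]
        refine Finset.sum_nonneg (fun j _ => ?_)
        by_cases hj : a z j = 0
        · rw [hj]; simp
        · have := hpos j (fun h => hj (hsupp z hzK j h)); positivity
      linarith
    · rintro ⟨l, hl, hrel⟩
      obtain ⟨i, hli, hgi⟩ := hrel_to l hrel
      obtain ⟨z, hzK, hz0, hze⟩ := hconstruct i hgi
      refine ⟨z, hzK, hz0, ?_⟩
      rw [hze, dotProduct_smul, smul_eq_mul]
      have h1 := hdotself z hz0
      have h2 : lam i < 0 := hli ▸ hl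
      nlinarith
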